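/- For every quadruple ε = (ε₁, ε₂, ε₃, ε₄) with each εᵢ ∈ {+1, −1} and every integer n, the presented group G'_{ε,n} (the mapping-torus group of the free-group automorphism Φ_{ε,n}) is generated by the images of x₁ and t; that is, the subgroup closure of {x₁, t} in G'_{ε,n} is the whole group. In particular the fundamental group of the once-punctured genus-two surface bundle M'_{ε,n} has rank at most two. -/

import Mathlib

/-! `F` is the free group on four generators `a₁, a₂, a₃, a₄`;
here `a 0 = a₁`, `a 1 = a₂`, `a 2 = a₃`, `a 3 = a₄`. -/

abbrev F : Type := FreeGroup (Fin 4)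

def a (i : Fin 4) : F := FreeGroup.of i

/-- `Δ i ε` is the endomorphism `Δ_{i+1}^ε` of `F` induced by the `ε`-th power of the
Dehn twist `D_{i+1}` (the index is shifted by one): `Δ 0 ε = Δ₁^ε`, …, `Δ 4 ε = Δ₅^ε`. -/
def Δ : Fin 5 → ℤ → (F →* F) := fun i ε =>
  FreeGroup.lift (![
    ![a 0, a 1 * a 0 ^ ε, a 2, a 3],
    ![a 0 * a 1 ^ (-ε), a 1, a 2, a 3],
    ![a 0, ((a 2)⁻¹ * a 0) ^ ε * a 1, a 2, ((a 2)⁻¹ * a 0) ^ ε * a 3],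
    ![a 0, a 1, a 2 * a 3 ^ ε, a 3],
    ![a 0, a 1, a 2, a 3 * a 2 ^ (-ε)]] i)

lemma Δ_inv_comp (i : Fin 5) (ε : ℤ) :
    (Δ i (-ε)).comp (Δ i ε) = MonoidHom.id F := by
  apply FreeGroup.ext_hom
  intro j
  fin_cases i <;> fin_cases j <;>
    simp [Δ, a, MonoidHom.comp_apply]

/-- `Δ i ε` as an automorphism of `F` (its inverse is `Δ i (-ε)`). -/
def Δaut (i : Fin 5) (ε : ℤ) : F ≃* F where
  toFun := Δ i ε
  invFun := Δ i (-ε)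
  left_inv := fun x => by
    simpa using congrArg (fun f : F →* F => f x) (Δ_inv_comp i ε)
  right_inv := fun x => by
    have h := congrArg (fun f : F →* F => f x) (Δ_inv_comp i (-ε))
    rw [neg_neg] at h
    simpa using h
  map_mul' := map_mul _

/-- The automorphism `Φ_{ε,n} = Δ₂^{ε₂} ∘ Δ₁^{ε₁} ∘ Δ₃^{ε₃} ∘ Δ₄^{ε₄} ∘ (Δ₅^{+1})^n` of `F`
(multiplication of automorphisms is composition). -/
def Φ (ε₁ ε₂ ε₃ ε₄ n : ℤ) : F ≃* F :=
  Δaut 1 ε₂ * Δaut 0 ε₁ * Δaut 2 ε₃ * Δaut 3 ε₄ * (Δaut 4 1) ^ n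

/-- `ρ` rewrites a word in `a₁,…,a₄` as the corresponding word in the first four
generators `x₁,…,x₄` of the free group on five generators `x₁, x₂, x₃, x₄, t`
(here `t` is the fifth generator `(4 : Fin 5)`). -/
def ρ : F →* FreeGroup (Fin 5) := FreeGroup.lift fun j => FreeGroup.of (Fin.castSucc j)

/-- The relators `t⁻¹·xᵢ·t·(ρ(Φ_{ε,n}(aᵢ)))⁻¹` for `i = 1, 2, 3, 4`. -/
def monodromyRels (ε₁ ε₂ ε₃ ε₄ n : ℤ) : Set (FreeGroup (Fin 5)) :=
  { w | ∃ i : Fin 4,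
      w = (FreeGroup.of 4)⁻¹ * FreeGroup.of (Fin.castSucc i) * FreeGroup.of 4 *
        (ρ (Φ ε₁ ε₂ ε₃ ε₄ n (a i)))⁻¹ }

/-- The surface relator `[x₁,x₂]·[x₃,x₄]⁻¹` on the generators `x₁,…,x₄`. -/
def surfaceRel : FreeGroup (Fin 5) :=
  (FreeGroup.of 0 * FreeGroup.of 1 * (FreeGroup.of 0)⁻¹ * (FreeGroup.of 1)⁻¹) *
    (FreeGroup.of 2 * FreeGroup.of 3 * (FreeGroup.of 2)⁻¹ * (FreeGroup.of 3)⁻¹)⁻¹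

/-- `G'_{ε,n}`, the mapping-torus group of `Φ_{ε,n}`, i.e. the fundamental group of the
once-punctured genus-two surface bundle `M'_{ε,n}`: generators `x₁, x₂, x₃, x₄, t` and
relators `t⁻¹·xᵢ·t·(ρ(Φ_{ε,n}(aᵢ)))⁻¹` for `i = 1,…,4`. -/
def G' (ε₁ ε₂ ε₃ ε₄ n : ℤ) : Type :=
  PresentedGroup (monodromyRels ε₁ ε₂ ε₃ ε₄ n)

instance (ε₁ ε₂ ε₃ ε₄ n : ℤ) : Group (G' ε₁ ε₂ ε₃ ε₄ n) :=
  inferInstanceAs (Group (PresentedGroup _))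
lemma fix_zpow (e : F ≃* F) (x : F) (h : e x = x) (n : ℤ) : (e ^ n) x = x := by
  have hnat : ∀ m : ℕ, (e ^ m) x = x := by
    intro m; induction m with
    | zero => rfl
    | succ k ih => rw [pow_succ]; show (e ^ k) (e x) = x; rw [h, ih]
  obtain ⟨m, rfl | rfl⟩ := Int.eq_nat_or_neg n
  · simpa [zpow_natCast] using hnat m
  · rw [zpow_neg, zpow_natCast, MulAut.inv_def, MulEquiv.symm_apply_eq, hnat]

lemma Phi0 (ε₁ ε₂ ε₃ ε₄ n : ℤ) :
    Φ ε₁ ε₂ ε₃ ε₄ n (a 0) = a 0 * a 1 ^ (-ε₂) := by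
  show (Δaut 1 ε₂) ((Δaut 0 ε₁) ((Δaut 2 ε₃) ((Δaut 3 ε₄) (((Δaut 4 1) ^ n) (a 0))))) = _
  rw [fix_zpow _ _ (by simp [Δaut, Δ, a]) n]
  simp [Δaut, Δ, a]

lemma Phi1 (ε₁ ε₂ ε₃ ε₄ n : ℤ) :
    Φ ε₁ ε₂ ε₃ ε₄ n (a 1) =
      ((a 2)⁻¹ * (a 0 * a 1 ^ (-ε₂))) ^ ε₃ * a 1 * (a 0 * a 1 ^ (-ε₂)) ^ ε₁ := by
  show (Δaut 1 ε₂) ((Δaut 0 ε₁) ((Δaut 2 ε₃) ((Δaut 3 ε₄) (((Δaut 4 1) ^ n) (a 1))))) = _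
  rw [fix_zpow _ _ (by simp [Δaut, Δ, a]) n]
  simp [Δaut, Δ, a, mul_assoc]

lemma Phi2 (ε₁ ε₂ ε₃ ε₄ n : ℤ) :
    Φ ε₁ ε₂ ε₃ ε₄ n (a 2) =
      a 2 * (((a 2)⁻¹ * (a 0 * a 1 ^ (-ε₂))) ^ ε₃ * a 3) ^ ε₄ := by
  show (Δaut 1 ε₂) ((Δaut 0 ε₁) ((Δaut 2 ε₃) ((Δaut 3 ε₄) (((Δaut 4 1) ^ n) (a 2))))) = _
  rw [fix_zpow _ _ (by simp [Δaut, Δ, a]) n]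
  simp [Δaut, Δ, a]

lemma mem_of_zpow_pm {G : Type*} [Group G] (H : Subgroup G) (y : G) (ε : ℤ)
    (hε : ε = 1 ∨ ε = -1) (h : y ^ ε ∈ H) : y ∈ H := by
  rcases hε with rfl | rfl
  · simpa using h
  · rw [zpow_neg, zpow_one] at h
    exact (H.inv_mem_iff).1 h

/-- `G'_{ε,n}` is generated by the images of `x₁` and `t`; in particular the fundamental
group of the once-punctured genus-two surface bundle `M'_{ε,n}` has rank at most two. -/
theorem G'_generated_by_two (ε₁ ε₂ ε₃ ε₄ : ℤ)
    (h₁ : ε₁ = 1 ∨ ε₁ = -1) (h₂ : ε₂ = 1 ∨ ε₂ = -1)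
    (h₃ : ε₃ = 1 ∨ ε₃ = -1) (h₄ : ε₄ = 1 ∨ ε₄ = -1) (n : ℤ) :
    Subgroup.closure
      ({PresentedGroup.of (rels := monodromyRels ε₁ ε₂ ε₃ ε₄ n) 0,
        PresentedGroup.of (rels := monodromyRels ε₁ ε₂ ε₃ ε₄ n) 4} :
          Set (G' ε₁ ε₂ ε₃ ε₄ n)) = ⊤ := by
  set rels := monodromyRels ε₁ ε₂ ε₃ ε₄ n with hrels
  let x : Fin 5 → G' ε₁ ε₂ ε₃ ε₄ n := fun j => PresentedGroup.of (rels := rels) j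
  set H : Subgroup (G' ε₁ ε₂ ε₃ ε₄ n) := Subgroup.closure {x 0, x 4} with hH
  let π : FreeGroup (Fin 5) →* G' ε₁ ε₂ ε₃ ε₄ n := PresentedGroup.mk rels
  let φ : F →* G' ε₁ ε₂ ε₃ ε₄ n := π.comp ρ
  have hφ : ∀ j : Fin 4, φ (a j) = x (Fin.castSucc j) := by
    intro j
    show π (ρ (FreeGroup.of j)) = _
    rw [ρ, FreeGroup.lift_apply_of]
    rfl
  have key : ∀ i : Fin 4,
      (x 4)⁻¹ * x (Fin.castSucc i) * x 4 = φ (Φ ε₁ ε₂ ε₃ ε₄ n (a i)) := by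
    intro i
    have h1 : π ((FreeGroup.of 4)⁻¹ * FreeGroup.of (Fin.castSucc i) * FreeGroup.of 4 *
        (ρ (Φ ε₁ ε₂ ε₃ ε₄ n (a i)))⁻¹) = 1 :=
      (QuotientGroup.eq_one_iff _).2 (Subgroup.subset_normalClosure ⟨i, rfl⟩)
    rw [map_mul, map_inv, mul_inv_eq_one, map_mul, map_mul, map_inv] at h1
    exact h1
  have hx0 : x 0 ∈ H := Subgroup.subset_closure (Or.inl rfl)
  have ht : x 4 ∈ H := Subgroup.subset_closure (Or.inr rfl)
  have c0 : Fin.castSucc (0 : Fin 4) = (0 : Fin 5) := rfl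
  have c1 : Fin.castSucc (1 : Fin 4) = (1 : Fin 5) := rfl
  have c2 : Fin.castSucc (2 : Fin 4) = (2 : Fin 5) := rfl
  -- relation 0 gives x 1 ∈ H
  have r0 := key 0
  rw [c0, Phi0, map_mul, map_zpow, hφ 0, hφ 1, c0, c1] at r0
  have hx1 : x 1 ∈ H := by
    refine mem_of_zpow_pm H (x 1) (-ε₂) (by rcases h₂ with rfl | rfl <;> simp) ?_
    have e : (x 1) ^ (-ε₂) = (x 0)⁻¹ * ((x 4)⁻¹ * x 0 * x 4) := by rw [r0]; group
    rw [e]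
    exact mul_mem (inv_mem hx0) (mul_mem (mul_mem (inv_mem ht) hx0) ht)
  -- abbreviation u = x 0 * x 1 ^ (-ε₂)
  have hu : x 0 * x 1 ^ (-ε₂) ∈ H := mul_mem hx0 (zpow_mem hx1 _)
  -- relation 1 gives x 2 ∈ H
  have r1 := key 1
  rw [c1, Phi1, map_mul, map_mul, map_zpow, map_zpow, map_mul, map_mul, map_inv,
    map_zpow, hφ 0, hφ 1, hφ 2, c0, c1, c2] at r1
  have hA : ((x 2)⁻¹ * (x 0 * x 1 ^ (-ε₂))) ^ ε₃ ∈ H := by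
    have e : ((x 2)⁻¹ * (x 0 * x 1 ^ (-ε₂))) ^ ε₃ =
        ((x 4)⁻¹ * x 1 * x 4) * ((x 0 * x 1 ^ (-ε₂)) ^ ε₁)⁻¹ * (x 1)⁻¹ := by
      rw [r1]; group
    rw [e]
    exact mul_mem (mul_mem (mul_mem (mul_mem (inv_mem ht) hx1) ht)
      (inv_mem (zpow_mem hu _))) (inv_mem hx1)
  have hAbase : (x 2)⁻¹ * (x 0 * x 1 ^ (-ε₂)) ∈ H := mem_of_zpow_pm H _ _ h₃ hA
  have hx2 : x 2 ∈ H := by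
    have e : x 2 = (x 0 * x 1 ^ (-ε₂)) * ((x 2)⁻¹ * (x 0 * x 1 ^ (-ε₂)))⁻¹ := by group
    rw [e]
    exact mul_mem hu (inv_mem hAbase)
  -- relation 2 gives x 3 ∈ H
  have r2 := key 2
  rw [c2, Phi2, map_mul, map_zpow, map_mul, map_zpow, map_mul, map_mul, map_inv,
    map_zpow, hφ 0, hφ 1, hφ 2, hφ 3, c0, c1, c2] at r2
  have hB : (((x 2)⁻¹ * (x 0 * x 1 ^ (-ε₂))) ^ ε₃ * x (Fin.castSucc 3)) ^ ε₄ ∈ H := by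
    have e : (((x 2)⁻¹ * (x 0 * x 1 ^ (-ε₂))) ^ ε₃ * x (Fin.castSucc 3)) ^ ε₄ =
        (x 2)⁻¹ * ((x 4)⁻¹ * x 2 * x 4) := by rw [r2]; group
    rw [e]
    exact mul_mem (inv_mem hx2) (mul_mem (mul_mem (inv_mem ht) hx2) ht)
  have hBbase := mem_of_zpow_pm H _ _ h₄ hB
  have hx3 : x (Fin.castSucc 3) ∈ H := by
    have e : x (Fin.castSucc 3) =
        (((x 2)⁻¹ * (x 0 * x 1 ^ (-ε₂))) ^ ε₃)⁻¹ *
          (((x 2)⁻¹ * (x 0 * x 1 ^ (-ε₂))) ^ ε₃ * x (Fin.castSucc 3)) := by group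
    rw [e]
    exact mul_mem (inv_mem (zpow_mem hAbase _)) hBbase
  -- conclude
  rw [eq_top_iff]
  refine le_trans (le_of_eq (PresentedGroup.closure_range_of rels).symm) ?_
  refine Subgroup.closure_le _ |>.2 ?_
  rintro _ ⟨j, rfl⟩
  fin_cases j
  · exact hx0
  · exact hx1
  · exact hx2
  · exact hx3
  · exact ht
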